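/- For every integer n ≥ 2, every dimension d ≥ 1, every parity-oblivious quantum random access code {ρ_x : x ∈ {0,1}^n} of d×d density matrices, and every decoding strategy (M_t)_{t=1}^n, the worst-case bias satisfies min_{t ∈ {1,…,n}} (2 p_t − 1) ≤ 1/√n. -/

import Mathlib

open Matrix BigOperators Finset
open scoped ComplexOrder

set_option linter.unusedSectionVars false
set_option maxHeartbeats 1000000

section helpers
variable {m : Type*} [Fintype m] [DecidableEq m]

lemma psd_eq_conj_mul_self' {A : Matrix m m ℂ} (hA : A.PosSemidef) :
    ∃ B : Matrix m m ℂ, A = Bᴴ * B := by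
  open scoped MatrixOrder in
  obtain ⟨B, hB⟩ := CStarAlgebra.nonneg_iff_eq_star_mul_self.mp hA.nonneg
  exact ⟨B, hB⟩

lemma psd_trace_re_nonneg' {A : Matrix m m ℂ} (hA : A.PosSemidef) : 0 ≤ A.trace.re := by
  obtain ⟨B, rfl⟩ := psd_eq_conj_mul_self' hA
  have h : (Bᴴ * B).trace = ∑ i, ∑ j, (starRingEnd ℂ) (B j i) * B j i := by
    simp [Matrix.trace, Matrix.mul_apply, Matrix.diag, Matrix.conjTranspose_apply]
  rw [h, Complex.re_sum]
  refine Finset.sum_nonneg fun i _ => ?_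
  rw [Complex.re_sum]
  refine Finset.sum_nonneg fun j _ => ?_
  rw [Complex.conj_mul']
  norm_num [← Complex.ofReal_pow]

lemma trace_mul_psd_re_nonneg {A B : Matrix m m ℂ} (hA : A.PosSemidef) (hB : B.PosSemidef) :
    0 ≤ (A * B).trace.re := by
  obtain ⟨C, rfl⟩ := psd_eq_conj_mul_self' hB
  have h : (A * (Cᴴ * C)).trace = (C * A * Cᴴ).trace := by
    rw [← Matrix.mul_assoc, Matrix.trace_mul_comm, Matrix.mul_assoc]
  rw [h]
  exact psd_trace_re_nonneg' (hA.mul_mul_conjTranspose_same C)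

open scoped MatrixOrder in
lemma psd_mul_one_sub {N : Matrix m m ℂ} (hN : N.PosSemidef)
    (h1N : ((1 : Matrix m m ℂ) - N).PosSemidef) : (N * (1 - N)).PosSemidef := by
  have hs := (CFC.sqrt_nonneg N).posSemidef
  have hmul := CFC.sqrt_mul_sqrt_self N hN.nonneg
  have comm0 : CFC.sqrt N * N = N * CFC.sqrt N := by
    calc CFC.sqrt N * N = CFC.sqrt N * (CFC.sqrt N * CFC.sqrt N) := by rw [hmul]
      _ = (CFC.sqrt N * CFC.sqrt N) * CFC.sqrt N := by rw [Matrix.mul_assoc]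
      _ = N * CFC.sqrt N := by rw [hmul]
  have comm : CFC.sqrt N * (1 - N) = (1 - N) * CFC.sqrt N := by
    rw [Matrix.mul_sub, Matrix.sub_mul, Matrix.mul_one, Matrix.one_mul, comm0]
  have key : N * (1 - N) = CFC.sqrt N * (1 - N) * CFC.sqrt N := by
    calc N * (1 - N) = (CFC.sqrt N * CFC.sqrt N) * (1 - N) := by rw [hmul]
      _ = CFC.sqrt N * (CFC.sqrt N * (1 - N)) := Matrix.mul_assoc _ _ _
      _ = CFC.sqrt N * ((1 - N) * CFC.sqrt N) := by rw [comm]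
      _ = CFC.sqrt N * (1 - N) * CFC.sqrt N := (Matrix.mul_assoc _ _ _).symm
  have h2 := h1N.conjTranspose_mul_mul_same (CFC.sqrt N)
  rw [hs.isHermitian.eq] at h2
  rw [key]; exact h2

lemma trace_H_sq_le {σ N : Matrix m m ℂ} (hσ : σ.PosSemidef)
    (hN : N.PosSemidef) (h1N : ((1 : Matrix m m ℂ) - N).PosSemidef) :
    ((σ * (((2:ℂ) • N - 1) * ((2:ℂ) • N - 1))).trace).re ≤ σ.trace.re := by
  have hexp : ((2:ℂ) • N - 1) * ((2:ℂ) • N - 1)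
      = 1 - (4:ℂ) • (N * ((1 : Matrix m m ℂ) - N)) := by
    simp only [Matrix.mul_sub, Matrix.sub_mul, Matrix.smul_mul, Matrix.mul_smul,
      Matrix.mul_one, Matrix.one_mul]
    module
  rw [hexp, Matrix.mul_sub, Matrix.trace_sub, Matrix.mul_smul, Matrix.trace_smul,
    Matrix.mul_one]
  have h0 : 0 ≤ (σ * (N * ((1 : Matrix m m ℂ) - N))).trace.re :=
    trace_mul_psd_re_nonneg hσ (psd_mul_one_sub hN h1N)
  rw [Complex.sub_re]
  have h4 : ((4:ℂ) • (σ * (N * ((1 : Matrix m m ℂ) - N))).trace).re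
      = 4 * (σ * (N * ((1 : Matrix m m ℂ) - N))).trace.re := by
    simp [smul_eq_mul, Complex.mul_re]
  rw [h4]
  linarith

lemma trace_conj_mul_eq (X Y : Matrix m m ℂ) :
    (Xᴴ * Y).trace = ∑ p : m × m, (starRingEnd ℂ) (X p.1 p.2) * Y p.1 p.2 := by
  rw [Fintype.sum_prod_type]
  simp [Matrix.trace, Matrix.mul_apply, Matrix.diag, Matrix.conjTranspose_apply]
  rw [Finset.sum_comm]

lemma trace_conj_self_re (X : Matrix m m ℂ) :
    (Xᴴ * X).trace.re = ∑ p : m × m, ‖X p.1 p.2‖^2 := by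
  rw [trace_conj_mul_eq, Complex.re_sum]
  refine Finset.sum_congr rfl fun p _ => ?_
  rw [Complex.conj_mul']
  norm_num [← Complex.ofReal_pow]

lemma trace_cs_abs (X Y : Matrix m m ℂ) :
    ‖(Xᴴ * Y).trace‖^2 ≤ (Xᴴ * X).trace.re * (Yᴴ * Y).trace.re := by
  rw [trace_conj_mul_eq, trace_conj_self_re, trace_conj_self_re]
  calc ‖∑ p : m × m, (starRingEnd ℂ) (X p.1 p.2) * Y p.1 p.2‖^2
      ≤ (∑ p : m × m, ‖X p.1 p.2‖ * ‖Y p.1 p.2‖)^2 := by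
        refine pow_le_pow_left₀ (norm_nonneg _) ?_ 2
        refine le_trans (norm_sum_le _ _) ?_
        refine le_of_eq (Finset.sum_congr rfl fun p _ => ?_)
        rw [norm_mul, Complex.norm_conj]
    _ ≤ (∑ p : m × m, ‖X p.1 p.2‖^2) * ∑ p : m × m, ‖Y p.1 p.2‖^2 :=
        Finset.sum_mul_sq_le_sq_mul_sq _ _ _

lemma trace_cs {ρ A : Matrix m m ℂ} (hρ : ρ.PosSemidef) (h1 : ρ.trace = 1)
    (hA : A.IsHermitian) : ((ρ * A).trace.re)^2 ≤ (ρ * (A * A)).trace.re := by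
  obtain ⟨B, rfl⟩ := psd_eq_conj_mul_self' hρ
  have k2 : ((B * A)ᴴ * (B * A)).trace = (Bᴴ * B * (A * A)).trace := by
    rw [Matrix.conjTranspose_mul, hA.eq, Matrix.mul_assoc,
      Matrix.trace_mul_comm, Matrix.mul_assoc, Matrix.mul_assoc, Matrix.mul_assoc]
  have key := trace_cs_abs B (B * A)
  rw [k2, h1, Complex.one_re, one_mul, ← Matrix.mul_assoc] at key
  have hre : ((Bᴴ * B * A).trace.re)^2 ≤ ‖(Bᴴ * B * A).trace‖^2 := by
    rw [← sq_abs]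
    exact pow_le_pow_left₀ (abs_nonneg _) (Complex.abs_re_le_norm _) 2
  calc ((Bᴴ * B * A).trace.re)^2 ≤ ‖(Bᴴ * B * A).trace‖^2 := hre
    _ ≤ (Bᴴ * B * (A * A)).trace.re := key

lemma zmod2_not_zero_iff (a : ZMod 2) : ¬(a = 0) ↔ a = 1 := by
  revert a; decide

lemma zmod2_coeff_eq (a b : ZMod 2) :
    (((if a = 0 then (1:ℝ) else -1) * (if b = 0 then (1:ℝ) else -1) : ℝ) : ℂ)
      = if a + b = 0 then 1 else -1 := by
  rcases (show a = 0 ∨ a = 1 by revert a; decide) with rfl | rfl <;>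
    rcases (show b = 0 ∨ b = 1 by revert b; decide) with rfl | rfl <;>
    simp [show (1:ZMod 2) + 1 = 0 from rfl]

end helpers

/-- Every parity-oblivious quantum random access code of `n ≥ 2` bits into
`d × d` density matrices, together with any decoding strategy, has worst-case bias at
most `1/√n`. -/
theorem parity_oblivious_qrac_worst_case_bias_le
    (n d : ℕ) (hn : 2 ≤ n) (hd : 1 ≤ d)
    (ρ : (Fin n → ZMod 2) → Matrix (Fin d) (Fin d) ℂ)
    (hpsd : ∀ x, (ρ x).PosSemidef)
    (htr : ∀ x, (ρ x).trace = 1)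
    (hpo : ∀ S : Finset (Fin n), 2 ≤ S.card →
      ∑ x ∈ Finset.univ.filter (fun x : Fin n → ZMod 2 => ∑ i ∈ S, x i = 0), ρ x =
      ∑ x ∈ Finset.univ.filter (fun x : Fin n → ZMod 2 => ∑ i ∈ S, x i = 1), ρ x)
    (M : Fin n → Matrix (Fin d) (Fin d) ℂ)
    (hherm : ∀ t, (M t).IsHermitian)
    (hpos : ∀ t, (M t).PosSemidef)
    (hle1 : ∀ t, ((1 : Matrix (Fin d) (Fin d) ℂ) - M t).PosSemidef)
    (p : Fin n → ℝ)
    (hp : ∀ t, p t = (1 / 2 ^ n : ℝ) * ∑ x : Fin n → ZMod 2,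
      (if x t = 0 then ((ρ x * M t).trace).re
       else ((ρ x * (1 - M t)).trace).re)) :
    Finset.univ.inf' (Finset.univ_nonempty_iff.mpr ⟨⟨0, by omega⟩⟩)
      (fun t => 2 * p t - 1) ≤ 1 / Real.sqrt n := by
  classical
  have hnemp : (Finset.univ : Finset (Fin n)).Nonempty := Finset.univ_nonempty_iff.mpr ⟨⟨0, by omega⟩⟩
  rw [Finset.inf'_le_iff]
  obtain ⟨t0, -, ht0min⟩ := Finset.exists_min_image Finset.univ (fun t => 2 * p t - 1) hnemp
  refine ⟨t0, Finset.mem_univ t0, ?_⟩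
  set ε := 2 * p t0 - 1 with hε_def
  have hεle : ∀ t, ε ≤ 2 * p t - 1 := fun t => ht0min t (Finset.mem_univ t)
  have hn0 : (0:ℝ) < n := by
    have : (2:ℝ) ≤ n := by exact_mod_cast hn
    linarith
  by_cases hεneg : ε ≤ 0
  · have : (0:ℝ) < 1 / Real.sqrt n := by positivity
    linarith
  push_neg at hεneg
  -- notation
  set w : ℝ := (1 / 2 ^ n : ℝ) with hw_def
  have hw0 : 0 ≤ w := by positivity
  have hcard : (Finset.univ : Finset (Fin n → ZMod 2)).card = 2 ^ n := by
    simp [Finset.card_univ]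
  have hw1 : w * (2:ℝ) ^ n = 1 := by
    rw [hw_def]; field_simp
  set H : Fin n → Matrix (Fin d) (Fin d) ℂ := fun t => (2:ℂ) • M t - 1 with hH_def
  set c : (Fin n → ZMod 2) → Fin n → ℝ := fun x t => if x t = 0 then 1 else -1 with hc_def
  set A : (Fin n → ZMod 2) → Matrix (Fin d) (Fin d) ℂ :=
    fun x => ∑ t, ((c x t : ℝ) : ℂ) • H t with hA_def
  have hHherm : ∀ t, (H t).IsHermitian := by
    intro t
    show (H t)ᴴ = H t
    simp only [hH_def]
    rw [Matrix.conjTranspose_sub, Matrix.conjTranspose_smul, Matrix.conjTranspose_one,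
      (hherm t).eq]
    norm_num
  have hAherm : ∀ x, (A x).IsHermitian := by
    intro x
    show (A x)ᴴ = A x
    simp only [hA_def]
    rw [Matrix.conjTranspose_sum]
    exact Finset.sum_congr rfl fun t _ => by
      rw [Matrix.conjTranspose_smul, (hHherm t).eq, Complex.star_def, Complex.conj_ofReal]
  have htrH : ∀ t x, ((ρ x * H t).trace) = 2 * ((ρ x * M t).trace) - 1 := by
    intro t x
    simp only [hH_def]
    rw [Matrix.mul_sub, Matrix.mul_smul, Matrix.trace_sub, Matrix.trace_smul, Matrix.mul_one,
      htr x, smul_eq_mul]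
  have htr1M : ∀ t x, ((ρ x * ((1 : Matrix (Fin d) (Fin d) ℂ) - M t)).trace)
      = 1 - ((ρ x * M t).trace) := by
    intro t x
    rw [Matrix.mul_sub, Matrix.trace_sub, Matrix.mul_one, htr x]
  have hbias : ∀ t, 2 * p t - 1 = w * ∑ x, c x t * ((ρ x * H t).trace).re := by
    intro t
    have hpt : ∀ x : Fin n → ZMod 2, c x t * ((ρ x * H t).trace).re
        = 2 * (if x t = 0 then ((ρ x * M t).trace).re
            else ((ρ x * ((1 : Matrix (Fin d) (Fin d) ℂ) - M t)).trace).re) - 1 := by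
      intro x
      by_cases h : x t = 0
      · simp only [hc_def, if_pos h, one_mul, htrH t x]
        simp [Complex.sub_re, Complex.mul_re]
      · simp only [hc_def, if_neg h, htr1M t x, htrH t x]
        simp [Complex.sub_re, Complex.mul_re]
        ring
    rw [hp t, Finset.sum_congr rfl (fun x _ => hpt x), Finset.sum_sub_distrib,
      ← Finset.mul_sum, Finset.sum_const, hcard]
    simp only [nsmul_eq_mul, mul_one]
    push_cast
    linear_combination hw1
  set X : (Fin n → ZMod 2) → ℝ := fun x => ((ρ x * A x).trace).re with hX_def
  set Y : (Fin n → ZMod 2) → ℝ := fun x => ((ρ x * (A x * A x)).trace).re with hY_def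
  have hXsum : ∀ x, X x = ∑ t, c x t * ((ρ x * H t).trace).re := by
    intro x
    simp only [hX_def, hA_def, Matrix.mul_sum, Matrix.mul_smul, Matrix.trace_sum,
      Matrix.trace_smul, Complex.re_sum, smul_eq_mul, Complex.re_ofReal_mul]
  have step1 : (n:ℝ) * ε ≤ w * ∑ x, X x := by
    have h1 : (n:ℝ) * ε ≤ ∑ t : Fin n, (2 * p t - 1) := by
      have h : ∑ _t : Fin n, ε ≤ ∑ t : Fin n, (2 * p t - 1) :=
        Finset.sum_le_sum fun t _ => hεle t
      simpa [Finset.sum_const, Finset.card_univ, nsmul_eq_mul] using h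
    have h2 : ∑ t : Fin n, (2 * p t - 1) = w * ∑ x, X x := by
      calc ∑ t : Fin n, (2 * p t - 1)
          = ∑ t, w * ∑ x, c x t * ((ρ x * H t).trace).re :=
            Finset.sum_congr rfl fun t _ => hbias t
        _ = w * ∑ t, ∑ x, c x t * ((ρ x * H t).trace).re := by rw [Finset.mul_sum]
        _ = w * ∑ x, ∑ t, c x t * ((ρ x * H t).trace).re := by rw [Finset.sum_comm]
        _ = w * ∑ x, X x := by rw [Finset.sum_congr rfl fun x _ => (hXsum x).symm]
    linarith [h2 ▸ h1]
  have hAA : ∀ x, A x * A x = ∑ t, ∑ u, ((c x t * c x u : ℝ) : ℂ) • (H t * H u) := by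
    intro x
    simp only [hA_def]
    rw [Finset.sum_mul_sum]
    refine Finset.sum_congr rfl fun t _ => Finset.sum_congr rfl fun u _ => ?_
    rw [Matrix.smul_mul, Matrix.mul_smul, smul_smul, ← Complex.ofReal_mul]
  have hYsum : ∀ x, Y x = ∑ t, ∑ u, (c x t * c x u) * ((ρ x * (H t * H u)).trace).re := by
    intro x
    simp only [hY_def, hAA x, Matrix.mul_sum, Matrix.mul_smul, Matrix.trace_sum,
      Matrix.trace_smul, Complex.re_sum, smul_eq_mul, Complex.re_ofReal_mul]
  have hT : ∀ t u, ∑ x, (c x t * c x u) * ((ρ x * (H t * H u)).trace).re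
      = (((∑ x, ((c x t * c x u : ℝ) : ℂ) • ρ x) * (H t * H u)).trace).re := by
    intro t u
    rw [Matrix.sum_mul, Matrix.trace_sum, Complex.re_sum]
    exact Finset.sum_congr rfl fun x _ => by
      rw [Matrix.smul_mul, Matrix.trace_smul, smul_eq_mul, Complex.re_ofReal_mul]
  have hTdiag : ∀ t, (∑ x, ((c x t * c x t : ℝ) : ℂ) • ρ x) = ∑ x, ρ x := by
    intro t
    refine Finset.sum_congr rfl fun x _ => ?_
    have h : c x t * c x t = 1 := by by_cases h : x t = 0 <;> simp [hc_def, h]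
    rw [h]
    simp
  have hTzero : ∀ t u, t ≠ u → (∑ x, ((c x t * c x u : ℝ) : ℂ) • ρ x) = 0 := by
    intro t u hne
    have hcoeff : ∀ x : Fin n → ZMod 2,
        ((c x t * c x u : ℝ) : ℂ) = if x t + x u = 0 then 1 else -1 := fun x =>
      zmod2_coeff_eq (x t) (x u)
    have e0 : ∑ x, ((c x t * c x u : ℝ) : ℂ) • ρ x
        = ∑ x ∈ Finset.univ.filter (fun x : Fin n → ZMod 2 => x t + x u = 0), ρ x
          - ∑ x ∈ Finset.univ.filter (fun x : Fin n → ZMod 2 => ¬(x t + x u = 0)), ρ x := by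
      rw [← Finset.sum_filter_add_sum_filter_not Finset.univ
        (fun x : Fin n → ZMod 2 => x t + x u = 0)]
      have e1 : ∑ x ∈ Finset.univ.filter (fun x : Fin n → ZMod 2 => x t + x u = 0),
          ((c x t * c x u : ℝ) : ℂ) • ρ x
          = ∑ x ∈ Finset.univ.filter (fun x : Fin n → ZMod 2 => x t + x u = 0), ρ x := by
        refine Finset.sum_congr rfl fun x hx => ?_
        rw [hcoeff x, if_pos (Finset.mem_filter.mp hx).2, one_smul]
      have e2 : ∑ x ∈ Finset.univ.filter (fun x : Fin n → ZMod 2 => ¬(x t + x u = 0)),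
          ((c x t * c x u : ℝ) : ℂ) • ρ x
          = -∑ x ∈ Finset.univ.filter (fun x : Fin n → ZMod 2 => ¬(x t + x u = 0)), ρ x := by
        rw [← Finset.sum_neg_distrib]
        refine Finset.sum_congr rfl fun x hx => ?_
        rw [hcoeff x, if_neg (Finset.mem_filter.mp hx).2, neg_smul, one_smul]
      rw [e1, e2, ← sub_eq_add_neg]
    have hS : 2 ≤ ({t, u} : Finset (Fin n)).card := le_of_eq (Finset.card_pair hne).symm
    have hps := hpo {t, u} hS
    simp only [Finset.sum_pair hne] at hps
    have hfilter : Finset.univ.filter (fun x : Fin n → ZMod 2 => ¬(x t + x u = 0))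
        = Finset.univ.filter (fun x : Fin n → ZMod 2 => x t + x u = 1) := by
      refine Finset.filter_congr fun x _ => ?_
      simp [zmod2_not_zero_iff]
    rw [e0, hfilter, hps, sub_self]
  have step2 : w * ∑ x, Y x ≤ (n:ℝ) := by
    have e : w * ∑ x, Y x = ∑ t, w * (((∑ x, ρ x) * (H t * H t)).trace).re := by
      calc w * ∑ x, Y x
          = w * ∑ x, ∑ t, ∑ u, (c x t * c x u) * ((ρ x * (H t * H u)).trace).re := by
            rw [Finset.sum_congr rfl fun x _ => hYsum x]
        _ = w * ∑ t, ∑ x, ∑ u, (c x t * c x u) * ((ρ x * (H t * H u)).trace).re := by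
            rw [Finset.sum_comm]
        _ = w * ∑ t, ∑ u, ∑ x, (c x t * c x u) * ((ρ x * (H t * H u)).trace).re := by
            rw [Finset.sum_congr rfl fun t _ => Finset.sum_comm]
        _ = w * ∑ t, ∑ u, (((∑ x, ((c x t * c x u : ℝ) : ℂ) • ρ x) * (H t * H u)).trace).re := by
            rw [Finset.sum_congr rfl fun t _ => Finset.sum_congr rfl fun u _ => hT t u]
        _ = ∑ t, w * (((∑ x, ρ x) * (H t * H t)).trace).re := by
            rw [Finset.mul_sum]
            refine Finset.sum_congr rfl fun t _ => ?_
            congr 1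
            rw [Finset.sum_eq_single t]
            · rw [hTdiag t]
            · intro u _ hut
              rw [hTzero t u (fun h => hut h.symm), Matrix.zero_mul, Matrix.trace_zero]
              simp
            · intro h
              exact absurd (Finset.mem_univ t) h
    rw [e]
    have hσ : (∑ x, ρ x : Matrix (Fin d) (Fin d) ℂ).PosSemidef := by
      refine Finset.sum_induction ρ _ (fun a b ha hb => ha.add hb) Matrix.PosSemidef.zero
        (fun x _ => hpsd x)
    have hσtr : (∑ x, ρ x : Matrix (Fin d) (Fin d) ℂ).trace.re = (2:ℝ)^n := by
      rw [Matrix.trace_sum]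
      rw [Finset.sum_congr rfl fun x _ => htr x, Finset.sum_const, hcard, nsmul_eq_mul, mul_one]
      push_cast
      rw [show ((2:ℂ)^n) = (((2:ℝ)^n : ℝ) : ℂ) by push_cast; ring, Complex.ofReal_re]
    have hb : ∀ t : Fin n, w * (((∑ x, ρ x) * (H t * H t)).trace).re ≤ w * (2:ℝ)^n := by
      intro t
      refine mul_le_mul_of_nonneg_left ?_ hw0
      have := trace_H_sq_le hσ (hpos t) (hle1 t)
      rw [hσtr] at this
      simpa only [hH_def] using this
    calc ∑ t : Fin n, w * (((∑ x, ρ x) * (H t * H t)).trace).re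
        ≤ ∑ t : Fin n, w * (2:ℝ)^n := Finset.sum_le_sum fun t _ => hb t
      _ = (n:ℝ) := by
          rw [Finset.sum_const, Finset.card_univ, Fintype.card_fin, nsmul_eq_mul, hw1, mul_one]
  have hY0 : ∀ x, 0 ≤ Y x := by
    intro x
    have hAA_psd : (A x * A x).PosSemidef := by
      have h := Matrix.posSemidef_conjTranspose_mul_self (A x)
      rwa [(hAherm x).eq] at h
    exact trace_mul_psd_re_nonneg (hpsd x) hAA_psd
  have hXY : ∀ x, (X x)^2 ≤ Y x := fun x => trace_cs (hpsd x) (htr x) (hAherm x)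
  have cauchy : (w * ∑ x, X x)^2 ≤ w * ∑ x, Y x := by
    have h := Finset.sum_mul_sq_le_sq_mul_sq Finset.univ
      (fun _ : Fin n → ZMod 2 => Real.sqrt w) (fun x => Real.sqrt w * X x)
    have hsq : Real.sqrt w * Real.sqrt w = w := Real.mul_self_sqrt hw0
    have hl : ∑ x, Real.sqrt w * (Real.sqrt w * X x) = w * ∑ x, X x := by
      rw [Finset.mul_sum]
      exact Finset.sum_congr rfl fun x _ => by rw [← mul_assoc, hsq]
    have hr1 : ∑ _x : Fin n → ZMod 2, (Real.sqrt w)^2 = 1 := by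
      rw [Finset.sum_const, hcard, nsmul_eq_mul, Real.sq_sqrt hw0, ← hw1]
      push_cast
      ring
    have hr2 : ∑ x, (Real.sqrt w * X x)^2 ≤ w * ∑ x, Y x := by
      rw [Finset.mul_sum]
      refine Finset.sum_le_sum fun x _ => ?_
      rw [mul_pow, Real.sq_sqrt hw0]
      exact mul_le_mul_of_nonneg_left (hXY x) hw0
    rw [hl, hr1, one_mul] at h
    exact le_trans h hr2
  have hnε : (0:ℝ) ≤ (n:ℝ) * ε := le_of_lt (mul_pos hn0 hεneg)
  have key : ((n:ℝ) * ε)^2 ≤ (n:ℝ) :=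
    le_trans (le_trans (pow_le_pow_left₀ hnε step1 2) cauchy) step2
  have hε2 : ε^2 ≤ 1/(n:ℝ) := by
    rw [mul_pow] at key
    rw [le_div_iff₀ hn0]
    nlinarith [key, hn0]
  calc (2 * p t0 - 1) = ε := hε_def.symm ▸ rfl
    _ = Real.sqrt (ε^2) := (Real.sqrt_sq hεneg.le).symm
    _ ≤ Real.sqrt (1/(n:ℝ)) := Real.sqrt_le_sqrt hε2
    _ = 1 / Real.sqrt n := by rw [one_div, one_div, Real.sqrt_inv]
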